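/- Let L > 0, β₀ > 0. Let θ₀ = 1 and, for k ≥ 1, θ_k ∈ (0,1) satisfy (1 − θ_k)/θ_k² = 1/θ_{k−1}²; set ϑ_k = θ_k², and let ε_k ≥ 0 for k ≥ 0. Let (x*, λ*) satisfy Πx* = 0 and ∇f(x*) + Πλ* = 0. Let (x^k)_{k≥−1} ⊂ ℝ^{m×n} with x^{−1} = x⁰ satisfy, for every k ≥ 0: y^k = x^k + θ_k·((1 − θ_{k−1})/θ_{k−1})·(x^k − x^{k−1}) (so y⁰ = x⁰), z^k = y^k − (1/L)∇f(y^k), and there exists δ^k with ‖δ^k‖_F ≤ √(2ε_k/L), (β₀/ϑ_k)‖Πδ^k‖²_F ≤ 2ε_k and L(x^{k+1} − z^k + δ^k) + (β₀/ϑ_k)Π(x^{k+1} + δ^k) = 0. Define w⁰ = x⁰ and, for k ≥ 1, w^k = x^k/θ_{k−1} − ((1 − θ_{k−1})/θ_{k−1})·x^{k−1}; define ρ_k = f(x^k) − f(x*) + ⟨λ*, Πx^k⟩; define ℓ₀² = ‖λ*‖²_F/(2β₀) + (L/2)‖x⁰ − x*‖²_F and, for k ≥ 1, ℓ_k² = ρ_k/θ_{k−1}²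 + (1/(2β₀))‖(β₀/θ_{k−1}²)Πx^k − λ*‖²_F + (L/2)‖w^k − x*‖²_F. Then for every K ≥ 0: ℓ_{K+1}² ≤ ( Σ_{k=1}^{K+1} 2√(ε_{k−1})/θ_{k−1} )² + 2·Σ_{k=0}^{K} ε_k/θ_k² + 2ℓ₀². -/

import Mathlib

open scoped RealInnerProductSpace

/-- The column-average operator `x ↦ (1/m)·1 1ᵀ x` on `ℝ^{m×n}`
(viewed as a Euclidean space with the Frobenius inner product). -/
noncomputable def colAvg (m n : ℕ) (x : EuclideanSpace ℝ (Fin m × Fin n)) :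
    EuclideanSpace ℝ (Fin m × Fin n) :=
  WithLp.toLp 2 (fun p => (m : ℝ)⁻¹ * ∑ k : Fin m, x (k, p.2))

/-- The operator `Π = I − (1/m)·1 1ᵀ` acting on `ℝ^{m×n}`. -/
noncomputable def cProj (m n : ℕ) (x : EuclideanSpace ℝ (Fin m × Fin n)) :
    EuclideanSpace ℝ (Fin m × Fin n) :=
  x - colAvg m n x

section aux
variable {m n : ℕ}

lemma colAvg_add (a b : EuclideanSpace ℝ (Fin m × Fin n)) :
    colAvg m n (a + b) = colAvg m n a + colAvg m n b := by
  ext p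
  simp [colAvg, Finset.sum_add_distrib, mul_add]

lemma colAvg_sub (a b : EuclideanSpace ℝ (Fin m × Fin n)) :
    colAvg m n (a - b) = colAvg m n a - colAvg m n b := by
  ext p
  simp [colAvg, Finset.sum_sub_distrib, mul_sub]

lemma colAvg_smul (r : ℝ) (a : EuclideanSpace ℝ (Fin m × Fin n)) :
    colAvg m n (r • a) = r • colAvg m n a := by
  ext p
  simp only [colAvg, PiLp.toLp_apply, PiLp.smul_apply, smul_eq_mul, Finset.mul_sum]
  apply Finset.sum_congr rfl
  intro i _
  ring

lemma cProj_add (a b : EuclideanSpace ℝ (Fin m × Fin n)) :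
    cProj m n (a + b) = cProj m n a + cProj m n b := by
  simp only [cProj, colAvg_add]; abel

lemma cProj_sub (a b : EuclideanSpace ℝ (Fin m × Fin n)) :
    cProj m n (a - b) = cProj m n a - cProj m n b := by
  simp only [cProj, colAvg_sub]; abel

lemma cProj_smul (r : ℝ) (a : EuclideanSpace ℝ (Fin m × Fin n)) :
    cProj m n (r • a) = r • cProj m n a := by
  simp only [cProj, colAvg_smul, smul_sub]

lemma inner_colAvg (a b : EuclideanSpace ℝ (Fin m × Fin n)) :
    ⟪colAvg m n a, b⟫ = (m:ℝ)⁻¹ * ∑ j : Fin n, (∑ k : Fin m, a (k, j)) * (∑ i : Fin m, b (i, j)) := by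
  simp only [PiLp.inner_apply, RCLike.inner_apply, conj_trivial]
  rw [Fintype.sum_prod_type_right]
  rw [Finset.mul_sum]
  apply Finset.sum_congr rfl
  intro j _
  simp only [colAvg]
  rw [← Finset.sum_mul]
  ring

lemma colAvg_inner (a b : EuclideanSpace ℝ (Fin m × Fin n)) :
    ⟪colAvg m n a, b⟫ = ⟪a, colAvg m n b⟫ := by
  rw [inner_colAvg, real_inner_comm, inner_colAvg]
  ring_nf
  rw [Finset.sum_congr rfl (fun j _ => mul_comm _ _)]

lemma cProj_inner (a b : EuclideanSpace ℝ (Fin m × Fin n)) :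
    ⟪cProj m n a, b⟫ = ⟪a, cProj m n b⟫ := by
  simp only [cProj, inner_sub_left, inner_sub_right, colAvg_inner]

lemma colAvg_idem (hm : 0 < m) (a : EuclideanSpace ℝ (Fin m × Fin n)) :
    colAvg m n (colAvg m n a) = colAvg m n a := by
  ext p
  show (m:ℝ)⁻¹ * ∑ k : Fin m, ((m:ℝ)⁻¹ * ∑ l : Fin m, a (l, p.2)) = _
  rw [Finset.sum_const, Finset.card_univ, Fintype.card_fin, nsmul_eq_mul]
  rw [show (m:ℝ) * ((m:ℝ)⁻¹ * ∑ l : Fin m, a (l, p.2)) = ((m:ℝ) * (m:ℝ)⁻¹) * ∑ l : Fin m, a (l, p.2) by ring]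
  rw [mul_inv_cancel₀ (by positivity), one_mul]
  rfl

lemma cProj_idem (hm : 0 < m) (a : EuclideanSpace ℝ (Fin m × Fin n)) :
    cProj m n (cProj m n a) = cProj m n a := by
  have : colAvg m n (cProj m n a) = 0 := by
    show colAvg m n (a - colAvg m n a) = 0
    rw [colAvg_sub, colAvg_idem hm, sub_self]
  show cProj m n a - colAvg m n (cProj m n a) = cProj m n a
  rw [this, sub_zero]

lemma inner_cProj_cProj (hm : 0 < m) (a b : EuclideanSpace ℝ (Fin m × Fin n)) :
    ⟪cProj m n a, cProj m n b⟫ = ⟪cProj m n a, b⟫ := by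
  rw [← cProj_inner, cProj_idem hm, cProj_inner]

end aux

lemma ip_three {F : Type*} [NormedAddCommGroup F] [InnerProductSpace ℝ F] (a b c : F) :
    ⟪b - a, b - c⟫ = (‖b - a‖ ^ 2 + ‖b - c‖ ^ 2 - ‖c - a‖ ^ 2) / 2 := by
  simp only [@norm_sub_sq_real F, inner_sub_left, inner_sub_right,
    real_inner_self_eq_norm_sq]
  linear_combination real_inner_comm a b + real_inner_comm c a

lemma ip_young {F : Type*} [NormedAddCommGroup F] [InnerProductSpace ℝ F]
    {β : ℝ} (hβ : 0 < β) (v w : F) :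
    -⟪v, w⟫ - (1 / (2 * β)) * ‖w‖ ^ 2 ≤ (β / 2) * ‖v‖ ^ 2 := by
  have h1 : -⟪v, w⟫ ≤ ‖v‖ * ‖w‖ := by
    have h := abs_real_inner_le_norm v w
    linarith [neg_abs_le ⟪v, w⟫]
  have h2 : ‖v‖ * ‖w‖ ≤ (β / 2) * ‖v‖ ^ 2 + (1 / (2 * β)) * ‖w‖ ^ 2 := by
    rw [show (β / 2) * ‖v‖ ^ 2 + (1 / (2 * β)) * ‖w‖ ^ 2
        = (β ^ 2 * ‖v‖ ^ 2 + ‖w‖ ^ 2) / (2 * β) by field_simp]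
    rw [le_div_iff₀ (by positivity)]
    nlinarith [sq_nonneg (β * ‖v‖ - ‖w‖)]
  linarith

set_option maxHeartbeats 1000000 in
theorem stmt8 (m n : ℕ) (hm : 0 < m) (L β₀ : ℝ) (hL : 0 < L) (hβ₀ : 0 < β₀)
    (θ ε : ℕ → ℝ)
    (hθ0 : θ 0 = 1)
    (hθ : ∀ k : ℕ, 0 < θ (k + 1) ∧ θ (k + 1) < 1 ∧
      (1 - θ (k + 1)) / (θ (k + 1)) ^ 2 = 1 / (θ k) ^ 2)
    (hε : ∀ k : ℕ, 0 ≤ ε k)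
    (f : EuclideanSpace ℝ (Fin m × Fin n) → ℝ)
    (gf : EuclideanSpace ℝ (Fin m × Fin n) → EuclideanSpace ℝ (Fin m × Fin n))
    -- `f` is convex with gradient `gf`
    (hconv : ∀ a b, f a + ⟪gf a, b - a⟫ ≤ f b)
    -- `f` is `L`-smooth with gradient `gf`
    (hsmooth : ∀ a b, f b ≤ f a + ⟪gf a, b - a⟫ + (L / 2) * ‖b - a‖ ^ 2)
    (xs lam : EuclideanSpace ℝ (Fin m × Fin n))
    (hxs : cProj m n xs = 0) (hlam : gf xs + cProj m n lam = 0)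
    (x y z δ w : ℕ → EuclideanSpace ℝ (Fin m × Fin n))
    -- the extrapolation step (with the convention `x^{−1} = x⁰`, via truncated
    -- subtraction `0 - 1 = 0` on `ℕ`; for `k = 0` the coefficient is `0` since `θ₀ = 1`)
    (hy : ∀ k : ℕ, y k = x k + (θ k * ((1 - θ (k - 1)) / θ (k - 1))) • (x k - x (k - 1)))
    (hz : ∀ k : ℕ, z k = y k - L⁻¹ • gf (y k))
    (hδ1 : ∀ k : ℕ, ‖δ k‖ ≤ Real.sqrt (2 * ε k / L))
    (hδ2 : ∀ k : ℕ, (β₀ / (θ k) ^ 2) * ‖cProj m n (δ k)‖ ^ 2 ≤ 2 * ε k)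
    (hopt : ∀ k : ℕ,
      L • (x (k + 1) - z k + δ k) + (β₀ / (θ k) ^ 2) • cProj m n (x (k + 1) + δ k) = 0)
    (hw0 : w 0 = x 0)
    (hw : ∀ k : ℕ, w (k + 1) = (θ k)⁻¹ • x (k + 1) - ((1 - θ k) / θ k) • x k)
    (ρ ℓsq : ℕ → ℝ)
    (hρ : ∀ k : ℕ, ρ k = f (x k) - f xs + ⟪lam, cProj m n (x k)⟫)
    (hℓ0 : ℓsq 0 = ‖lam‖ ^ 2 / (2 * β₀) + (L / 2) * ‖x 0 - xs‖ ^ 2)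
    (hℓ : ∀ k : ℕ, ℓsq (k + 1) = ρ (k + 1) / (θ k) ^ 2
      + (1 / (2 * β₀)) * ‖(β₀ / (θ k) ^ 2) • cProj m n (x (k + 1)) - lam‖ ^ 2
      + (L / 2) * ‖w (k + 1) - xs‖ ^ 2) :
    ∀ K : ℕ,
      ℓsq (K + 1) ≤ (∑ k ∈ Finset.range (K + 1), 2 * Real.sqrt (ε k) / θ k) ^ 2
        + 2 * ∑ k ∈ Finset.range (K + 1), ε k / (θ k) ^ 2
        + 2 * ℓsq 0 := by
  
  have hθpos : ∀ k, 0 < θ k := by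
    intro k
    cases k with
    | zero => rw [hθ0]; norm_num
    | succ j => exact (hθ j).1
  have hθle : ∀ k, θ k ≤ 1 := by
    intro k
    cases k with
    | zero => rw [hθ0]
    | succ j => exact le_of_lt (hθ j).2.1
  have hθne : ∀ k, θ k ≠ 0 := fun k => ne_of_gt (hθpos k)
  have hgxs : gf xs = -cProj m n lam := by
    have := hlam; linear_combination (norm := module) this
  have hρnn : ∀ k, 0 ≤ ρ k := by
    intro k
    rw [hρ]
    have h1 := hconv xs (x k)
    have h2 : ⟪gf xs, x k - xs⟫ = -⟪lam, cProj m n (x k)⟫ := by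
      rw [hgxs, inner_neg_left, cProj_inner, cProj_sub, hxs, sub_zero]
    rw [h2] at h1
    linarith
  -- the auxiliary multiplier sequence
  set lamh : ℕ → EuclideanSpace ℝ (Fin m × Fin n) :=
    fun k => Nat.casesOn k 0 (fun j => (β₀ / θ j ^ 2) • cProj m n (x (j + 1))) with hlamh
  have hlamh0 : lamh 0 = 0 := rfl
  have hlamhS : ∀ k, lamh (k + 1) = (β₀ / θ k ^ 2) • cProj m n (x (k + 1)) := fun k => rfl
  have hlamo : ∀ k, (1 - θ k) • cProj m n (x k) = (θ k ^ 2 / β₀) • lamh k := by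
    intro k
    cases k with
    | zero => rw [hθ0, hlamh0]; simp
    | succ j =>
      rw [hlamhS j, smul_smul]
      have h := (hθ j).2.2
      have hs : (1 - θ (j + 1)) = θ (j + 1) ^ 2 / β₀ * (β₀ / θ j ^ 2) := by
        have e1 := hθne j
        have e2 := hθne (j + 1)
        have e3 := hβ₀.ne'
        field_simp at h ⊢
        linear_combination h
      rw [← hs]
  have hlamn : ∀ k, cProj m n (x (k + 1)) = (θ k ^ 2 / β₀) • lamh (k + 1) := by
    intro k
    rw [hlamhS k, smul_smul]
    have hs : θ k ^ 2 / β₀ * (β₀ / θ k ^ 2) = 1 := by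
      field_simp [hθne k]
    rw [hs, one_smul]
  have hLsqk : ∀ k, ℓsq k = ((1 - θ k) / θ k ^ 2) * ρ k
      + (1 / (2 * β₀)) * ‖lamh k - lam‖ ^ 2 + (L / 2) * ‖w k - xs‖ ^ 2 := by
    intro k
    cases k with
    | zero =>
      rw [hℓ0, hθ0, hw0, hlamh0, zero_sub, norm_neg]
      ring
    | succ j =>
      rw [hℓ j, ← hlamhS j, (hθ j).2.2]
      ring
  have hℓS : ∀ k, ℓsq (k + 1) = (1 / θ k ^ 2) * ρ (k + 1)
      + (1 / (2 * β₀)) * ‖lamh (k + 1) - lam‖ ^ 2 + (L / 2) * ‖w (k + 1) - xs‖ ^ 2 := by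
    intro k
    rw [hℓ k, ← hlamhS k]
    ring
  have hℓnn : ∀ k, 0 ≤ ℓsq k := by
    intro k
    rw [hLsqk k]
    have h1 : 0 ≤ (1 - θ k) / θ k ^ 2 := div_nonneg (by linarith [hθle k]) (sq_nonneg _)
    have h2 : 0 ≤ (1 / (2 * β₀)) * ‖lamh k - lam‖ ^ 2 := by positivity
    have h3 : 0 ≤ (L / 2) * ‖w k - xs‖ ^ 2 := by positivity
    have h4 := mul_nonneg h1 (hρnn k)
    linarith
  have hWle : ∀ k, (L / 2) * ‖w (k + 1) - xs‖ ^ 2 ≤ ℓsq (k + 1) := by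
    intro k
    rw [hℓS k]
    have h1 : 0 ≤ (1 / θ k ^ 2) * ρ (k + 1) := mul_nonneg (by positivity) (hρnn _)
    have h2 : 0 ≤ (1 / (2 * β₀)) * ‖lamh (k + 1) - lam‖ ^ 2 := by positivity
    linarith
  -- the key one-step estimate
  have key : ∀ k, ℓsq (k + 1) ≤ ℓsq k + ε k / θ k ^ 2
      + 2 * Real.sqrt (ε k) / θ k * Real.sqrt (ℓsq (k + 1)) := by
    intro k
    have hθkpos := hθpos k
    have hθkne := hθne k
    -- y in terms of w
    have hyw : y k = (1 - θ k) • x k + θ k • w k := by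
      cases k with
      | zero =>
        rw [hy 0, hw0]
        norm_num [hθ0]
      | succ j =>
        rw [hy (j + 1), hw j, Nat.add_sub_cancel]
        match_scalars <;> field_simp [hθne j] <;> ring
    set u : EuclideanSpace ℝ (Fin m × Fin n) := θ k • xs + (1 - θ k) • x k with hu
    have hF1 : x (k + 1) - u = θ k • (w (k + 1) - xs) := by
      rw [hw k, hu]
      match_scalars <;> field_simp [hθne k]
    have hF2 : y k - u = θ k • (w k - xs) := by
      rw [hyw, hu]
      module
    have hay : x (k + 1) - y k = θ k • ((w (k + 1) - xs) - (w k - xs)) := by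
      rw [smul_sub, ← hF1, ← hF2]
      abel
    have hxy : (x (k + 1) + δ k) - y k = θ k • ((w (k + 1) - xs) - (w k - xs)) + δ k := by
      rw [← hay]; abel
    -- rewritten optimality condition
    have hR1 : L • ((x (k + 1) + δ k) - y k) + gf (y k)
        + (β₀ / θ k ^ 2) • cProj m n (x (k + 1) + δ k) = 0 := by
      have h := hopt k
      rw [hz k] at h
      have e : L • ((x (k + 1) + δ k) - y k) + gf (y k)
          + (β₀ / θ k ^ 2) • cProj m n (x (k + 1) + δ k)
          = L • (x (k + 1) - (y k - L⁻¹ • gf (y k)) + δ k)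
            + (β₀ / θ k ^ 2) • cProj m n (x (k + 1) + δ k) := by
        match_scalars <;> field_simp [hL.ne']
      rw [e, h]
    have hip : ⟪gf (y k), x (k + 1) - u⟫
        = -(L * ⟪(x (k + 1) + δ k) - y k, x (k + 1) - u⟫)
          - (β₀ / θ k ^ 2) * ⟪cProj m n (x (k + 1) + δ k), x (k + 1) - u⟫ := by
      have h9 : gf (y k) = -(L • ((x (k + 1) + δ k) - y k))
          - (β₀ / θ k ^ 2) • cProj m n (x (k + 1) + δ k) := by
        linear_combination (norm := module) hR1
      rw [h9, inner_sub_left, inner_neg_left, real_inner_smul_left, real_inner_smul_left]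
    have hS2 : f (x (k + 1)) ≤ f u + ⟪gf (y k), x (k + 1) - u⟫
        + (L / 2) * ‖x (k + 1) - y k‖ ^ 2 := by
      have h1 := hsmooth (y k) (x (k + 1))
      have h2 := hconv (y k) u
      have h3 : ⟪gf (y k), x (k + 1) - y k⟫
          = ⟪gf (y k), x (k + 1) - u⟫ + ⟪gf (y k), u - y k⟫ := by
        rw [← inner_add_right]
        congr 1
        abel
      rw [h3] at h1
      linarith
    have hS3 : f u ≤ θ k * f xs + (1 - θ k) * f (x k) := by
      have h1 := hconv u xs
      have h2 := hconv u (x k)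
      have h3 : θ k • (xs - u) + (1 - θ k) • (x k - u) = 0 := by
        rw [hu]; module
      have h4 : θ k * ⟪gf u, xs - u⟫ + (1 - θ k) * ⟪gf u, x k - u⟫ = 0 := by
        rw [← real_inner_smul_right, ← real_inner_smul_right, ← inner_add_right, h3,
          inner_zero_right]
      have h5 := mul_le_mul_of_nonneg_left h1 (le_of_lt (hθpos k))
      have h6 := mul_le_mul_of_nonneg_left h2 (by linarith [hθle k] : (0:ℝ) ≤ 1 - θ k)
      rw [mul_add] at h5 h6
      have h7 : θ k * f u + (1 - θ k) * f u = f u := by ring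
      linarith [h4, h5, h6, h7]
    -- the L-part identity
    have hL2 : -(L * ⟪(x (k + 1) + δ k) - y k, x (k + 1) - u⟫)
          + (L / 2) * ‖x (k + 1) - y k‖ ^ 2
        = (L * θ k ^ 2 / 2) * (‖w k - xs‖ ^ 2 - ‖w (k + 1) - xs‖ ^ 2)
          - L * θ k * ⟪δ k, w (k + 1) - xs⟫ := by
      set p : EuclideanSpace ℝ (Fin m × Fin n) := w (k + 1) - xs with hp
      set q : EuclideanSpace ℝ (Fin m × Fin n) := w k - xs with hq
      rw [hxy, hay, hF1]
      have e2 : ‖θ k • (p - q)‖ ^ 2 = θ k ^ 2 * ‖p - q‖ ^ 2 := by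
        rw [norm_smul, mul_pow, Real.norm_eq_abs, sq_abs]
      have e0 : ‖p - q‖ ^ 2 = ‖p‖ ^ 2 - 2 * ⟪p, q⟫ + ‖q‖ ^ 2 := norm_sub_sq_real p q
      rw [e2, e0]
      rw [inner_add_left, real_inner_smul_left, real_inner_smul_right, inner_sub_left,
        real_inner_smul_right, real_inner_self_eq_norm_sq]
      linear_combination (L * θ k ^ 2) * real_inner_comm p q
    -- the penalty-part identity
    have hPu : cProj m n u = (θ k ^ 2 / β₀) • lamh k := by
      rw [hu, cProj_add, cProj_smul, cProj_smul, hxs, smul_zero, zero_add, hlamo k]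
    have hS5 : (β₀ / θ k ^ 2) * ⟪cProj m n (x (k + 1) + δ k), x (k + 1) - u⟫
        = (θ k ^ 2 / β₀) * ⟪lamh (k + 1), lamh (k + 1) - lamh k⟫
          + ⟪cProj m n (δ k), lamh (k + 1) - lamh k⟫ := by
      rw [show ⟪cProj m n (x (k + 1) + δ k), x (k + 1) - u⟫
          = ⟪cProj m n (x (k + 1) + δ k), cProj m n (x (k + 1) - u)⟫ from
        (inner_cProj_cProj hm _ _).symm]
      rw [cProj_sub, hPu, hlamn k, cProj_add, hlamn k, ← smul_sub]
      rw [inner_add_left, real_inner_smul_left, real_inner_smul_right, real_inner_smul_right]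
      field_simp [hθne k]
    have hS6 : ⟪lamh (k + 1), lamh (k + 1) - lamh k⟫
        = (‖lamh (k + 1) - lam‖ ^ 2 + ‖lamh (k + 1) - lamh k‖ ^ 2 - ‖lamh k - lam‖ ^ 2) / 2
          + ⟪lam, lamh (k + 1) - lamh k⟫ := by
      have h := ip_three lam (lamh (k + 1)) (lamh k)
      have h2 : ⟪lamh (k + 1), lamh (k + 1) - lamh k⟫
          = ⟪lamh (k + 1) - lam, lamh (k + 1) - lamh k⟫ + ⟪lam, lamh (k + 1) - lamh k⟫ := by
        rw [← inner_add_left, sub_add_cancel]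
      rw [h2, h]
    have hS6b : (θ k ^ 2 / β₀) * ⟪lam, lamh (k + 1) - lamh k⟫
        = ⟪lam, cProj m n (x (k + 1))⟫ - (1 - θ k) * ⟪lam, cProj m n (x k)⟫ := by
      rw [← real_inner_smul_right, smul_sub, ← hlamn k, ← hlamo k, inner_sub_right,
        real_inner_smul_right]
    have hS7 : -⟪cProj m n (δ k), lamh (k + 1) - lamh k⟫
        - (θ k ^ 2 / (2 * β₀)) * ‖lamh (k + 1) - lamh k‖ ^ 2 ≤ ε k := by
      have h := ip_young (β := β₀ / θ k ^ 2) (div_pos hβ₀ (pow_pos (hθpos k) 2))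
        (cProj m n (δ k)) (lamh (k + 1) - lamh k)
      have h2 : (1 : ℝ) / (2 * (β₀ / θ k ^ 2)) = θ k ^ 2 / (2 * β₀) := by
        field_simp [hθne k]
      have h3 : (β₀ / θ k ^ 2 / 2) * ‖cProj m n (δ k)‖ ^ 2 ≤ ε k := by
        have := hδ2 k; linarith
      rw [h2] at h
      linarith
    -- master (scaled) inequality
    have hM : ρ (k + 1) ≤ (1 - θ k) * ρ k
        + (θ k ^ 2 / (2 * β₀)) * (‖lamh k - lam‖ ^ 2 - ‖lamh (k + 1) - lam‖ ^ 2) + ε k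
        + (L * θ k ^ 2 / 2) * (‖w k - xs‖ ^ 2 - ‖w (k + 1) - xs‖ ^ 2)
        - L * θ k * ⟪δ k, w (k + 1) - xs⟫ := by
      have hEQ : ⟪gf (y k), x (k + 1) - u⟫ + (L / 2) * ‖x (k + 1) - y k‖ ^ 2
          = (L * θ k ^ 2 / 2) * (‖w k - xs‖ ^ 2 - ‖w (k + 1) - xs‖ ^ 2)
            - L * θ k * ⟪δ k, w (k + 1) - xs⟫
            - (θ k ^ 2 / (2 * β₀)) * (‖lamh (k + 1) - lam‖ ^ 2
              + ‖lamh (k + 1) - lamh k‖ ^ 2 - ‖lamh k - lam‖ ^ 2)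
            - ⟪lam, cProj m n (x (k + 1))⟫ + (1 - θ k) * ⟪lam, cProj m n (x k)⟫
            - ⟪cProj m n (δ k), lamh (k + 1) - lamh k⟫ := by
        linear_combination hip + hL2 - hS5 - (θ k ^ 2 / β₀) * hS6 - hS6b
      rw [hρ (k + 1), hρ k]
      linarith [hS2, hS3, hS7, hEQ]
    -- divide by θ k ^ 2
    have hθ2 : (0 : ℝ) < θ k ^ 2 := by positivity
    have hdiv : ℓsq (k + 1) ≤ ℓsq k + ε k / θ k ^ 2
        - (L / θ k) * ⟪δ k, w (k + 1) - xs⟫ := by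
      rw [hℓS k, hLsqk k]
      have h2 : θ k ^ 2 * ((1 / θ k ^ 2) * ρ (k + 1)
            + (1 / (2 * β₀)) * ‖lamh (k + 1) - lam‖ ^ 2 + (L / 2) * ‖w (k + 1) - xs‖ ^ 2)
          ≤ θ k ^ 2 * (((1 - θ k) / θ k ^ 2) * ρ k
            + (1 / (2 * β₀)) * ‖lamh k - lam‖ ^ 2 + (L / 2) * ‖w k - xs‖ ^ 2
            + ε k / θ k ^ 2 - (L / θ k) * ⟪δ k, w (k + 1) - xs⟫) := by
        have e1 : θ k ^ 2 * ((1 / θ k ^ 2) * ρ (k + 1)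
              + (1 / (2 * β₀)) * ‖lamh (k + 1) - lam‖ ^ 2 + (L / 2) * ‖w (k + 1) - xs‖ ^ 2)
            = ρ (k + 1) + (θ k ^ 2 / (2 * β₀)) * ‖lamh (k + 1) - lam‖ ^ 2
              + (L * θ k ^ 2 / 2) * ‖w (k + 1) - xs‖ ^ 2 := by
          field_simp [hθne k]
        have e2 : θ k ^ 2 * (((1 - θ k) / θ k ^ 2) * ρ k
              + (1 / (2 * β₀)) * ‖lamh k - lam‖ ^ 2 + (L / 2) * ‖w k - xs‖ ^ 2
              + ε k / θ k ^ 2 - (L / θ k) * ⟪δ k, w (k + 1) - xs⟫)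
            = (1 - θ k) * ρ k + (θ k ^ 2 / (2 * β₀)) * ‖lamh k - lam‖ ^ 2
              + (L * θ k ^ 2 / 2) * ‖w k - xs‖ ^ 2 + ε k
              - L * θ k * ⟪δ k, w (k + 1) - xs⟫ := by
          field_simp [hθne k]
        rw [e1, e2]
        linarith [hM]
      exact le_of_mul_le_mul_left h2 hθ2
    -- bound the inner-product error term
    have h10 : -((L / θ k) * ⟪δ k, w (k + 1) - xs⟫)
        ≤ 2 * Real.sqrt (ε k) / θ k * Real.sqrt (ℓsq (k + 1)) := by
      have hdip : -⟪δ k, w (k + 1) - xs⟫ ≤ ‖δ k‖ * ‖w (k + 1) - xs‖ := by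
        have h := abs_real_inner_le_norm (δ k) (w (k + 1) - xs)
        linarith [neg_abs_le ⟪δ k, w (k + 1) - xs⟫]
      have hwb : ‖w (k + 1) - xs‖ ≤ Real.sqrt (2 * ℓsq (k + 1) / L) := by
        rw [← Real.sqrt_sq (norm_nonneg (w (k + 1) - xs))]
        apply Real.sqrt_le_sqrt
        rw [le_div_iff₀ hL]
        linarith [hWle k]
      have hc : L * (Real.sqrt (2 * ε k / L) * Real.sqrt (2 * ℓsq (k + 1) / L))
          = 2 * Real.sqrt (ε k) * Real.sqrt (ℓsq (k + 1)) := by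
        rw [← Real.sqrt_mul (div_nonneg (by linarith [hε k]) hL.le)]
        rw [show (2 * ε k / L) * (2 * ℓsq (k + 1) / L) = (2 / L) ^ 2 * (ε k * ℓsq (k + 1)) by
          ring]
        rw [Real.sqrt_mul (sq_nonneg (2 / L)), Real.sqrt_sq (by positivity : (0:ℝ) ≤ 2 / L),
          Real.sqrt_mul (hε k)]
        field_simp [hL.ne']
      have c0 : (0 : ℝ) ≤ L / θ k := le_of_lt (div_pos hL (hθpos k))
      have m1 : ‖δ k‖ * ‖w (k + 1) - xs‖
          ≤ Real.sqrt (2 * ε k / L) * Real.sqrt (2 * ℓsq (k + 1) / L) :=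
        mul_le_mul (hδ1 k) hwb (norm_nonneg _) (Real.sqrt_nonneg _)
      calc -((L / θ k) * ⟪δ k, w (k + 1) - xs⟫)
          = (L / θ k) * (-⟪δ k, w (k + 1) - xs⟫) := by ring
        _ ≤ (L / θ k) * (‖δ k‖ * ‖w (k + 1) - xs‖) := mul_le_mul_of_nonneg_left hdip c0
        _ ≤ (L / θ k) * (Real.sqrt (2 * ε k / L) * Real.sqrt (2 * ℓsq (k + 1) / L)) :=
            mul_le_mul_of_nonneg_left m1 c0
        _ = (1 / θ k) * (L * (Real.sqrt (2 * ε k / L) * Real.sqrt (2 * ℓsq (k + 1) / L))) := by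
            ring
        _ = (1 / θ k) * (2 * Real.sqrt (ε k) * Real.sqrt (ℓsq (k + 1))) := by rw [hc]
        _ = 2 * Real.sqrt (ε k) / θ k * Real.sqrt (ℓsq (k + 1)) := by ring
    linarith [hdiv, h10]
  -- cumulative estimate
  have cum : ∀ K : ℕ, ℓsq (K + 1) ≤ ℓsq 0 + (∑ k ∈ Finset.range (K + 1), ε k / θ k ^ 2)
      + ∑ k ∈ Finset.range (K + 1),
          2 * Real.sqrt (ε k) / θ k * Real.sqrt (ℓsq (k + 1)) := by
    intro K
    induction K with
    | zero => simpa using key 0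
    | succ j ih =>
      simp only [Finset.sum_range_succ] at ih ⊢
      linarith [key (j + 1)]
  intro K
  -- the maximum trick
  have hne : (Finset.range (K + 1)).Nonempty := ⟨0, Finset.mem_range.mpr (Nat.succ_pos K)⟩
  set M : ℝ := (Finset.range (K + 1)).sup' hne (fun k => Real.sqrt (ℓsq (k + 1))) with hM
  obtain ⟨j, hjmem, hjM⟩ := Finset.exists_mem_eq_sup' hne (fun k => Real.sqrt (ℓsq (k + 1)))
  have hMnn : 0 ≤ M := by rw [hM, hjM]; exact Real.sqrt_nonneg _
  set A : ℝ := ∑ k ∈ Finset.range (K + 1), 2 * Real.sqrt (ε k) / θ k with hA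
  set B : ℝ := ℓsq 0 + ∑ k ∈ Finset.range (K + 1), ε k / θ k ^ 2 with hB
  have hAnn : 0 ≤ A := by
    apply Finset.sum_nonneg
    intro k _
    exact div_nonneg (by positivity) (hθpos k).le
  have hεθnn : ∀ k : ℕ, (0:ℝ) ≤ ε k / θ k ^ 2 := fun k => div_nonneg (hε k) (sq_nonneg _)
  have hjK : j < K + 1 := Finset.mem_range.mp hjmem
  -- bound ℓsq (j+1) = M^2 by B + A * M
  have hMsq : M ^ 2 = ℓsq (j + 1) := by
    rw [hM, hjM]; exact Real.sq_sqrt (hℓnn (j + 1))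
  have hsub : Finset.range (j + 1) ⊆ Finset.range (K + 1) := by
    apply Finset.range_subset_range.mpr; omega
  have hstep : ℓsq (j + 1) ≤ B + A * M := by
    have h1 := cum j
    have h2 : ∑ k ∈ Finset.range (j + 1), ε k / θ k ^ 2
        ≤ ∑ k ∈ Finset.range (K + 1), ε k / θ k ^ 2 :=
      Finset.sum_le_sum_of_subset_of_nonneg hsub (fun k _ _ => hεθnn k)
    have h3 : ∑ k ∈ Finset.range (j + 1),
          2 * Real.sqrt (ε k) / θ k * Real.sqrt (ℓsq (k + 1)) ≤ A * M := by
      calc ∑ k ∈ Finset.range (j + 1), 2 * Real.sqrt (ε k) / θ k * Real.sqrt (ℓsq (k + 1))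
          ≤ ∑ k ∈ Finset.range (j + 1), 2 * Real.sqrt (ε k) / θ k * M := by
            apply Finset.sum_le_sum
            intro k hk
            apply mul_le_mul_of_nonneg_left _ (div_nonneg (by positivity) (hθpos k).le)
            rw [hM]
            exact Finset.le_sup' (fun i => Real.sqrt (ℓsq (i + 1)))
              (hsub hk)
        _ ≤ ∑ k ∈ Finset.range (K + 1), 2 * Real.sqrt (ε k) / θ k * M := by
            apply Finset.sum_le_sum_of_subset_of_nonneg hsub
            intro k _ _
            exact mul_nonneg (div_nonneg (by positivity) (hθpos k).le) hMnn
        _ = A * M := by rw [hA, Finset.sum_mul]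
    rw [hB]
    linarith
  have hM2 : M ^ 2 ≤ A ^ 2 + 2 * B := by
    rw [hMsq]
    nlinarith [hstep, sq_nonneg (A - M), hMsq]
  have hfin : ℓsq (K + 1) ≤ M ^ 2 := by
    have h1 : Real.sqrt (ℓsq (K + 1)) ≤ M := by
      rw [hM]
      exact Finset.le_sup' (fun i => Real.sqrt (ℓsq (i + 1)))
        (Finset.mem_range.mpr (Nat.lt_succ_self K))
    calc ℓsq (K + 1) = Real.sqrt (ℓsq (K + 1)) ^ 2 := (Real.sq_sqrt (hℓnn (K + 1))).symm
      _ ≤ M ^ 2 := by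
          apply pow_le_pow_left₀ (Real.sqrt_nonneg _) h1
  calc ℓsq (K + 1) ≤ M ^ 2 := hfin
    _ ≤ A ^ 2 + 2 * B := hM2
    _ = A ^ 2 + 2 * ∑ k ∈ Finset.range (K + 1), ε k / θ k ^ 2 + 2 * ℓsq 0 := by
        rw [hB]; ring
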